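/- The Voronoi map is continuous in the symmetric difference metric: for Q ⊂ ℝ² compact convex and N distinct points p = (p₁,…,p_N) ∈ Q^N (pᵢ ≠ p_j for i ≠ j), the map p ↦ V(p) sending distinct generator configurations to the N-tuple of Voronoi cells Vᵢ(p) = { q ∈ Q : ‖q−pᵢ‖ ≤ ‖q−p_j‖ ∀ j } is continuous, where the distance between two N-tuples of cells is the sum of the Lebesgue measures of the symmetric differences of corresponding cells. -/

import Mathlib

open MeasureTheory

lemma slab_small (Q : Set (EuclideanSpace ℝ (Fin 2))) (hQc : IsCompact Q)
    (a b : EuclideanSpace ℝ (Fin 2)) (hab : a ≠ b) (c : ENNReal) (hc : 0 < c) :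
    ∃ t > (0:ℝ), volume {q ∈ Q | |‖q - a‖ - ‖q - b‖| ≤ t} < c := by
  set s : ℕ → Set (EuclideanSpace ℝ (Fin 2)) :=
    fun n => {q ∈ Q | |‖q - a‖ - ‖q - b‖| ≤ 1 / (n + 1)} with hs
  have hmeas : ∀ n, MeasurableSet (s n) := by
    intro n
    apply hQc.measurableSet.inter
    have hcont : Continuous fun q : EuclideanSpace ℝ (Fin 2) => |‖q - a‖ - ‖q - b‖| :=
      (((continuous_id.sub continuous_const).norm).sub
        ((continuous_id.sub continuous_const).norm)).abs
    exact measurableSet_le hcont.measurable measurable_const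
  have hanti : Antitone s := by
    intro m n hmn q hq
    refine ⟨hq.1, hq.2.trans ?_⟩
    have : (m:ℝ) ≤ n := by exact_mod_cast hmn
    gcongr
  have hsub : (⋂ n, s n) ⊆ (AffineSubspace.perpBisector a b : Set (EuclideanSpace ℝ (Fin 2))) := by
    intro q hq
    rw [SetLike.mem_coe, AffineSubspace.mem_perpBisector_iff_dist_eq]
    have h : ∀ n : ℕ, |‖q - a‖ - ‖q - b‖| ≤ 1 / (n + 1) := fun n => (Set.mem_iInter.1 hq n).2
    have h0 : |‖q - a‖ - ‖q - b‖| ≤ 0 := by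
      by_contra hlt
      push_neg at hlt
      obtain ⟨n, hn⟩ := exists_nat_one_div_lt hlt
      exact absurd (h n) (by linarith)
    have : ‖q - a‖ = ‖q - b‖ := by
      have hnn := abs_nonneg (‖q - a‖ - ‖q - b‖)
      have heq : |‖q - a‖ - ‖q - b‖| = 0 := le_antisymm h0 hnn
      linarith [sub_eq_zero.mp (abs_eq_zero.mp heq)]
    simpa [dist_eq_norm] using this
  have h0 : volume (⋂ n, s n) = 0 :=
    measure_mono_null hsub
      (Measure.addHaar_affineSubspace volume _ (by simpa using hab))
  have hfin : volume (s 0) ≠ ⊤ :=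
    ((measure_mono (fun q hq => hq.1)).trans_lt hQc.measure_lt_top).ne
  have htend := tendsto_measure_iInter_atTop (μ := volume)
    (fun n => (hmeas n).nullMeasurableSet) hanti ⟨0, hfin⟩
  rw [h0] at htend
  obtain ⟨n, hn⟩ := (htend.eventually (gt_mem_nhds hc)).exists
  exact ⟨1 / (n + 1), by positivity, hn⟩

/-- The Voronoi cell of generator `i` in `Q`. -/
def voronoiCell (Q : Set (EuclideanSpace ℝ (Fin 2))) {N : ℕ}
    (p : Fin N → EuclideanSpace ℝ (Fin 2)) (i : Fin N) :
    Set (EuclideanSpace ℝ (Fin 2)) :=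
  {q ∈ Q | ∀ j, ‖q - p i‖ ≤ ‖q - p j‖}

/-- Continuity of the Voronoi map in the symmetric difference metric:
at any configuration of `N` distinct generators in a compact convex
`Q ⊂ ℝ²`, small perturbations of the generators produce Voronoi cells whose
total symmetric-difference distance is small. -/
theorem stmt_12 (Q : Set (EuclideanSpace ℝ (Fin 2)))
    (hQc : IsCompact Q) (hQconv : Convex ℝ Q) (hQint : (interior Q).Nonempty)
    (N : ℕ) (p : Fin N → EuclideanSpace ℝ (Fin 2))
    (hpQ : ∀ i, p i ∈ Q) (hpdist : ∀ i j, i ≠ j → p i ≠ p j) :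
    ∀ ε > 0, ∃ δ > 0, ∀ p' : Fin N → EuclideanSpace ℝ (Fin 2),
      (∀ i, p' i ∈ Q) → (∀ i j, i ≠ j → p' i ≠ p' j) →
      (∀ i, ‖p i - p' i‖ < δ) →
      ∑ i, (volume (symmDiff (voronoiCell Q p i) (voronoiCell Q p' i))).toReal < ε := by
  intro ε hε
  rcases Nat.eq_zero_or_pos N with hN | hN
  · subst hN
    exact ⟨1, one_pos, fun p' _ _ _ => by simpa using hε⟩
  set c : ENNReal := ENNReal.ofReal (ε / (N * N + 1)) with hcdef
  have hc : 0 < c := ENNReal.ofReal_pos.2 (by positivity)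
  have H : ∀ ij : Fin N × Fin N, ∃ t > (0:ℝ), ij.1 ≠ ij.2 →
      volume {q ∈ Q | |‖q - p ij.1‖ - ‖q - p ij.2‖| ≤ t} < c := by
    intro ij
    by_cases h : ij.1 = ij.2
    · exact ⟨1, one_pos, fun h' => absurd h h'⟩
    · obtain ⟨t, ht, h2⟩ := slab_small Q hQc _ _ (hpdist _ _ h) c hc
      exact ⟨t, ht, fun _ => h2⟩
  choose t ht hlt using H
  have hne : (Finset.univ : Finset (Fin N × Fin N)).Nonempty := by
    have : Nonempty (Fin N) := ⟨⟨0, hN⟩⟩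
    exact Finset.univ_nonempty
  set δ : ℝ := (Finset.univ.inf' hne t) / 2 with hδdef
  have hδpos : 0 < δ := by
    have : 0 < Finset.univ.inf' hne t := by
      rw [Finset.lt_inf'_iff]
      exact fun ij _ => ht ij
    positivity
  refine ⟨δ, hδpos, fun p' hp'Q hp'dist hclose => ?_⟩
  have hδt : ∀ ij : Fin N × Fin N, 2 * δ ≤ t ij := by
    intro ij
    have : Finset.univ.inf' hne t ≤ t ij := Finset.inf'_le _ (Finset.mem_univ ij)
    rw [hδdef]; linarith
  have hpert : ∀ (k : Fin N) (q : EuclideanSpace ℝ (Fin 2)),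
      |‖q - p k‖ - ‖q - p' k‖| < δ := by
    intro k q
    calc |‖q - p k‖ - ‖q - p' k‖| ≤ ‖(q - p k) - (q - p' k)‖ := abs_norm_sub_norm_le _ _
      _ = ‖p k - p' k‖ := by rw [show (q - p k) - (q - p' k) = -(p k - p' k) by abel, norm_neg]
      _ < δ := hclose k
  have hincl : ∀ i, symmDiff (voronoiCell Q p i) (voronoiCell Q p' i) ⊆
      ⋃ j ∈ Finset.univ.erase i, {q ∈ Q | |‖q - p i‖ - ‖q - p j‖| ≤ t (i, j)} := by
    intro i q hq
    rw [Set.mem_symmDiff] at hq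
    simp only [Set.mem_iUnion, Set.mem_setOf_eq, Finset.mem_erase, Finset.mem_univ, and_true,
      exists_prop]
    rcases hq with ⟨⟨hqQ, hall⟩, hnot⟩ | ⟨⟨hqQ, hall⟩, hnot⟩
    · have : ∃ j, ‖q - p' j‖ < ‖q - p' i‖ := by
        by_contra hcon
        push_neg at hcon
        exact hnot ⟨hqQ, fun j => hcon j⟩
      obtain ⟨j, hj⟩ := this
      have hji : j ≠ i := fun h => by rw [h] at hj; exact lt_irrefl _ hj
      refine ⟨j, hji, hqQ, ?_⟩
      have h1 := hall j
      have h2 := hpert i q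
      have h3 := hpert j q
      have h4 := hδt (i, j)
      rw [abs_lt] at h2 h3
      rw [abs_le]
      constructor <;> linarith
    · have : ∃ j, ‖q - p j‖ < ‖q - p i‖ := by
        by_contra hcon
        push_neg at hcon
        exact hnot ⟨hqQ, fun j => hcon j⟩
      obtain ⟨j, hj⟩ := this
      have hji : j ≠ i := fun h => by rw [h] at hj; exact lt_irrefl _ hj
      refine ⟨j, hji, hqQ, ?_⟩
      have h1 := hall j
      have h2 := hpert i q
      have h3 := hpert j q
      have h4 := hδt (i, j)
      rw [abs_lt] at h2 h3
      rw [abs_le]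
      constructor <;> linarith
  have hbound : ∀ i, volume (symmDiff (voronoiCell Q p i) (voronoiCell Q p' i)) ≤
      (N : ENNReal) * c := by
    intro i
    calc volume (symmDiff (voronoiCell Q p i) (voronoiCell Q p' i))
        ≤ volume (⋃ j ∈ Finset.univ.erase i,
            {q ∈ Q | |‖q - p i‖ - ‖q - p j‖| ≤ t (i, j)}) := measure_mono (hincl i)
      _ ≤ ∑ j ∈ Finset.univ.erase i,
            volume {q ∈ Q | |‖q - p i‖ - ‖q - p j‖| ≤ t (i, j)} := measure_biUnion_finset_le _ _
      _ ≤ ∑ _j ∈ Finset.univ.erase i, c := by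
          refine Finset.sum_le_sum fun j hj => ?_
          exact (hlt (i, j) (Ne.symm (Finset.mem_erase.1 hj).1)).le
      _ = ((Finset.univ.erase i).card : ENNReal) * c := by
          rw [Finset.sum_const, nsmul_eq_mul]
      _ ≤ (N : ENNReal) * c := by
          gcongr
          exact_mod_cast (Finset.card_erase_le.trans (by simp))
  have hNc : ((N : ENNReal) * c).toReal = N * (ε / (N * N + 1)) := by
    rw [hcdef, ENNReal.toReal_mul, ENNReal.toReal_ofReal (by positivity)]
    simp
  calc ∑ i, (volume (symmDiff (voronoiCell Q p i) (voronoiCell Q p' i))).toReal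
      ≤ ∑ _i : Fin N, ((N : ENNReal) * c).toReal := by
        refine Finset.sum_le_sum fun i _ => ?_
        exact ENNReal.toReal_mono (by simp [hcdef, ENNReal.mul_ne_top]) (hbound i)
    _ = N * (N * (ε / (N * N + 1))) := by rw [Finset.sum_const, hNc]; simp [mul_assoc]
    _ < ε := by
        have hpos : (0:ℝ) < N * N + 1 := by positivity
        have h1 : (N:ℝ) * N / (N * N + 1) < 1 := (div_lt_one hpos).2 (by linarith)
        have h2 : (N:ℝ) * ((N:ℝ) * (ε / (N * N + 1))) = ε * ((N:ℝ) * N / (N * N + 1)) := by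
          field_simp
        rw [h2]
        calc ε * ((N:ℝ) * N / (N * N + 1)) < ε * 1 := by
              exact mul_lt_mul_of_pos_left h1 hε
          _ = ε := mul_one ε
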